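/- arXiv:2001.01098 — 4 statements merged into one kernel-verified Lean document; each statement's English description precedes it below -/
import Mathlib

section
/- For every d ≥ 1 and all d×d complex (or real) matrices Σ and M, the function t ↦ e^{Σ + tM} is differentiable at t = 0 and its derivative equals dexp_Σ(M) · e^Σ, where dexp_Σ(M) = ∑_{n≥0} ad_Σ^n(M)/(n+1)!. Equivalently, the Fréchet differential of the exponential map at Σ applied to M is dexp_Σ(M) e^Σ. -/
noncomputable section

attribute [local instance] Matrix.normedAddCommGroup Matrix.normedSpace

/-- `d × d` complex matrices. -/
abbrev Mat (d : ℕ) := Matrix (Fin d) (Fin d) ℂ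

/-- Iterated adjoint operator. -/
def adPow {d : ℕ} (S : Mat d) : ℕ → Mat d → Mat d
  | 0, M => M
  | n + 1, M => S * adPow S n M - adPow S n M * S

/-- `dexp_Σ(M) = ∑_{n≥0} ad_Σ^n(M)/(n+1)!`. -/
def dexp {d : ℕ} (S M : Mat d) : Mat d :=
  ∑' n : ℕ, (((n + 1).factorial : ℂ))⁻¹ • adPow S n M

open Finset

lemma beta_id : ∀ (j i : ℕ), ∑ p ∈ range (j+1), (-1:ℂ)^p * (j.choose p) / (i+p+1)
    = (i.factorial * j.factorial) / (i+j+1).factorial := by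
  intro j
  induction j with
  | zero =>
    intro i
    rw [Finset.sum_range_one]
    have h1 : ((i:ℂ)+1) ≠ 0 := Nat.cast_add_one_ne_zero i
    have h4 : (((i+0+1).factorial : ℕ) : ℂ) ≠ 0 := Nat.cast_ne_zero.2 (Nat.factorial_ne_zero _)
    simp only [pow_zero, Nat.choose_zero_right, Nat.cast_one, one_mul, Nat.cast_zero, add_zero,
      Nat.factorial_zero, mul_one]
    rw [div_eq_div_iff h1 h4]
    have : (i+0+1).factorial = (i+1) * i.factorial := by
      rw [Nat.add_zero, Nat.factorial_succ]
    rw [this]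
    push_cast
    ring
  | succ j ih =>
    intro i
    have key : ∑ p ∈ range (j+2), (-1:ℂ)^p * ((j+1).choose p) / (i+p+1)
        = (∑ p ∈ range (j+1), (-1:ℂ)^p * (j.choose p) / (i+p+1))
          - ∑ p ∈ range (j+1), (-1:ℂ)^p * (j.choose p) / ((i:ℂ)+1+p+1) := by
      have e1 : ∑ p ∈ range (j+2), (-1:ℂ)^p * ((j+1).choose p) / (i+p+1)
          = (∑ q ∈ range (j+1), (-1:ℂ)^(q+1) * ((j+1).choose (q+1)) / (i+(q+1)+1)) + 1/((i:ℂ)+0+1) := by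
        rw [Finset.sum_range_succ' (fun p => (-1:ℂ)^p * ((j+1).choose p) / (i+p+1)) (j+1)]
        simp
      have e2 : ∑ p ∈ range (j+1), (-1:ℂ)^p * (j.choose p) / (i+p+1)
          = (∑ q ∈ range (j+1), (-1:ℂ)^(q+1) * (j.choose (q+1)) / (i+(q+1)+1)) + 1/((i:ℂ)+0+1) := by
        have h5 : ∑ p ∈ range (j+1), (-1:ℂ)^p * (j.choose p) / (i+p+1)
            = ∑ p ∈ range (j+2), (-1:ℂ)^p * (j.choose p) / (i+p+1) := by
          symm
          rw [Finset.sum_range_succ]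
          simp [Nat.choose_eq_zero_of_lt (Nat.lt_succ_self j)]
        rw [h5, Finset.sum_range_succ' (fun p => (-1:ℂ)^p * (j.choose p) / (i+p+1)) (j+1)]
        simp
      rw [e1, e2]
      have e3 : (∑ q ∈ range (j+1), (-1:ℂ)^(q+1) * (j.choose (q+1)) / (i+(q+1)+1))
          - (∑ p ∈ range (j+1), (-1:ℂ)^p * (j.choose p) / ((i:ℂ)+1+p+1))
          = ∑ q ∈ range (j+1), (-1:ℂ)^(q+1) * ((j+1).choose (q+1)) / (i+(q+1)+1) := by
        rw [← Finset.sum_sub_distrib]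
        apply Finset.sum_congr rfl
        intro q _
        have hc : (((j+1).choose (q+1)) : ℂ) = (j.choose (q+1) : ℂ) + (j.choose q : ℂ) := by
          rw [Nat.choose_succ_succ]; push_cast; ring
        rw [hc]
        ring
      linear_combination - e3
    rw [key, ih i]
    have ih2 := ih (i+1)
    push_cast at ih2
    rw [ih2]
    have e4 : i + 1 + j + 1 = i + j + 2 := by ring
    have e5 : i + (j+1) + 1 = i + j + 2 := by ring
    rw [e4, e5]
    have hf1 : ((i+j+2).factorial : ℂ) = ((i:ℂ)+(j:ℂ)+2) * ((i+j+1).factorial : ℂ) := by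
      rw [show i+j+2 = (i+j+1)+1 by ring, Nat.factorial_succ]
      push_cast; ring
    have hf2 : ((i+1).factorial : ℂ) = ((i:ℂ)+1) * (i.factorial : ℂ) := by
      rw [Nat.factorial_succ]; push_cast; ring
    have hf3 : ((j+1).factorial : ℂ) = ((j:ℂ)+1) * (j.factorial : ℂ) := by
      rw [Nat.factorial_succ]; push_cast; ring
    rw [hf1, hf2, hf3]
    have h1 : ((i+j+1).factorial : ℂ) ≠ 0 := Nat.cast_ne_zero.2 (Nat.factorial_ne_zero _)
    have h2 : ((i:ℂ)+(j:ℂ)+2) ≠ 0 := by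
      have := Nat.cast_add_one_ne_zero (R := ℂ) (i+j+1)
      push_cast at this
      intro h; apply this; rw [← h]; ring
    field_simp
    ring


lemma coef_id (i j : ℕ) :
    ∑ p ∈ range (j+1), ((-1:ℂ)^p * ((i+p).choose p)) /
        (((i+p+1).factorial : ℂ) * ((j-p).factorial : ℂ))
      = (((i+j+1).factorial : ℂ))⁻¹ := by
  have key : ∀ p ∈ range (j+1), ((-1:ℂ)^p * ((i+p).choose p)) /
        (((i+p+1).factorial : ℂ) * ((j-p).factorial : ℂ))
      = ((i.factorial : ℂ) * (j.factorial : ℂ))⁻¹ * ((-1:ℂ)^p * (j.choose p) / (i+p+1)) := by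
    intro p hp
    have hpj : p ≤ j := Nat.lt_succ_iff.1 (mem_range.1 hp)
    have h1 : (i+p).choose p * p.factorial * i.factorial = (i+p).factorial := by
      have := Nat.choose_mul_factorial_mul_factorial (Nat.le_add_left p i)
      simpa [Nat.add_sub_cancel] using this
    have h2 : j.choose p * p.factorial * (j-p).factorial = j.factorial :=
      Nat.choose_mul_factorial_mul_factorial hpj
    have hnat : (i+p).choose p * ((i+p+1) * i.factorial * j.factorial)
        = j.choose p * ((i+p+1).factorial * (j-p).factorial) := by
      apply Nat.eq_of_mul_eq_mul_right (Nat.factorial_pos p)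
      calc (i+p).choose p * ((i+p+1) * i.factorial * j.factorial) * p.factorial
          = ((i+p).choose p * p.factorial * i.factorial) * ((i+p+1) * j.factorial) := by ring
        _ = (i+p).factorial * ((i+p+1) * j.factorial) := by rw [h1]
        _ = ((i+p+1) * (i+p).factorial) * j.factorial := by ring
        _ = (i+p+1).factorial * j.factorial := by rw [← Nat.factorial_succ]
        _ = (j.choose p * p.factorial * (j-p).factorial) * (i+p+1).factorial := by rw [h2]; ring
        _ = j.choose p * ((i+p+1).factorial * (j-p).factorial) * p.factorial := by ring
    have hC : ((i+p).choose p : ℂ) * (((i:ℂ)+p+1) * i.factorial * j.factorial)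
        = (j.choose p : ℂ) * ((i+p+1).factorial * (j-p).factorial) := by
      have := congrArg (Nat.cast : ℕ → ℂ) hnat
      push_cast at this
      convert this using 2 <;> push_cast <;> ring
    have d1 : (((i+p+1).factorial : ℂ) * ((j-p).factorial : ℂ)) ≠ 0 := by
      apply mul_ne_zero <;> exact Nat.cast_ne_zero.2 (Nat.factorial_ne_zero _)
    have d2 : ((i:ℂ)+p+1) ≠ 0 := by
      have := Nat.cast_add_one_ne_zero (R := ℂ) (i+p)
      push_cast at this; exact this
    have d3 : ((i.factorial : ℂ) * (j.factorial : ℂ)) ≠ 0 := by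
      apply mul_ne_zero <;> exact Nat.cast_ne_zero.2 (Nat.factorial_ne_zero _)
    rw [inv_mul_eq_div, div_div, div_eq_div_iff d1 (mul_ne_zero d2 d3)]
    linear_combination ((-1:ℂ)^p) * hC
  rw [Finset.sum_congr rfl key, ← Finset.mul_sum, beta_id j i]
  have h1 : ((i+j+1).factorial : ℂ) ≠ 0 := Nat.cast_ne_zero.2 (Nat.factorial_ne_zero _)
  have d3 : ((i.factorial : ℂ)) ≠ 0 := Nat.cast_ne_zero.2 (Nat.factorial_ne_zero _)
  have d4 : ((j.factorial : ℂ)) ≠ 0 := Nat.cast_ne_zero.2 (Nat.factorial_ne_zero _)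
  field_simp


lemma mat_norm_mul (d : ℕ) (A B : Mat d) : ‖A * B‖ ≤ d * ‖A‖ * ‖B‖ := by
  rcases Nat.eq_zero_or_pos d with h | h
  · subst h; simp [Subsingleton.elim (A*B) 0]
  refine (Matrix.norm_le_iff (by positivity)).2 fun i j => ?_
  calc ‖(A*B) i j‖ = ‖∑ k, A i k * B k j‖ := by rw [Matrix.mul_apply]
    _ ≤ ∑ k : Fin d, ‖A i k * B k j‖ := norm_sum_le _ _
    _ ≤ ∑ k : Fin d, ‖A‖ * ‖B‖ := by
        refine Finset.sum_le_sum fun k _ => ?_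
        rw [norm_mul]
        exact mul_le_mul (Matrix.norm_entry_le_entrywise_sup_norm A)
          (Matrix.norm_entry_le_entrywise_sup_norm B) (norm_nonneg _) (norm_nonneg _)
    _ = d * ‖A‖ * ‖B‖ := by simp [mul_assoc]


lemma mat_bil (d : ℕ) : IsBoundedBilinearMap ℝ (fun p : Mat d × Mat d => p.1 * p.2) where
  add_left := fun x y z => add_mul x y z
  smul_left := fun c x y => smul_mul_assoc c x y
  add_right := fun x y z => mul_add x y z
  smul_right := fun c x y => mul_smul_comm c x y
  bound := ⟨d + 1, by positivity, fun x y =>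
    (mat_norm_mul d x y).trans (by
      have : (d:ℝ) ≤ d + 1 := by linarith
      have h1 : (0:ℝ) ≤ ‖x‖ * ‖y‖ := by positivity
      nlinarith [norm_nonneg x, norm_nonneg y])⟩

lemma hasDerivAt_matmul {d : ℕ} {u v : ℝ → Mat d} {u' v' : Mat d} {t : ℝ}
    (hu : HasDerivAt u u' t) (hv : HasDerivAt v v' t) :
    HasDerivAt (fun s => u s * v s) (u' * v t + u t * v') t := by
  have h := ((mat_bil d).hasFDerivAt (u t, v t)).comp_hasDerivAt t (hu.prodMk hv)
  convert h using 1
  case e'_9 => simp [IsBoundedBilinearMap.deriv_apply, add_comm]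
  all_goals rfl


lemma adPow_eq {d : ℕ} (S M : Mat d) (n : ℕ) :
    adPow S n M = ∑ k ∈ range (n+1),
      ((-1:ℂ)^k * (n.choose k)) • (S^(n-k) * M * S^k) := by
  induction n with
  | zero => simp [adPow]
  | succ n ih =>
    rw [show adPow S (n+1) M = S * adPow S n M - adPow S n M * S from rfl, ih]
    rw [Finset.mul_sum, Finset.sum_mul]
    have hL : ∀ k ∈ range (n+1), S * (((-1:ℂ)^k * (n.choose k)) • (S^(n-k) * M * S^k))
        = ((-1:ℂ)^k * (n.choose k)) • (S^(n+1-k) * M * S^k) := by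
      intro k hk
      have hkn : k ≤ n := Nat.lt_succ_iff.1 (mem_range.1 hk)
      rw [mul_smul_comm]
      congr 1
      rw [show n+1-k = (n-k)+1 from by omega, pow_succ']
      simp [mul_assoc]
    have hR : ∀ k ∈ range (n+1), (((-1:ℂ)^k * (n.choose k)) • (S^(n-k) * M * S^k)) * S
        = ((-1:ℂ)^k * (n.choose k)) • (S^(n-k) * M * S^(k+1)) := by
      intro k hk
      rw [smul_mul_assoc]
      congr 1
      rw [pow_succ]
      simp [mul_assoc]
    rw [Finset.sum_congr rfl hL, Finset.sum_congr rfl hR]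
    have hF : ∑ k ∈ range (n+1), ((-1:ℂ)^k * (n.choose k)) • (S^(n+1-k) * M * S^k)
        = ∑ k ∈ range (n+2), ((-1:ℂ)^k * (n.choose k)) • (S^(n+1-k) * M * S^k) := by
      symm
      rw [Finset.sum_range_succ]
      simp [Nat.choose_succ_self]
    rw [hF]
    rw [Finset.sum_range_succ' (fun k => ((-1:ℂ)^k * (n.choose k)) • (S^(n+1-k) * M * S^k)) (n+1)]
    rw [Finset.sum_range_succ' (fun k => ((-1:ℂ)^k * ((n+1).choose k)) • (S^(n+1-k) * M * S^k)) (n+1)]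
    have hP : ∀ q ∈ range (n+1),
        ((-1:ℂ)^(q+1) * (((n+1).choose (q+1)) : ℂ)) • (S^(n+1-(q+1)) * M * S^(q+1))
        = ((-1:ℂ)^(q+1) * ((n.choose (q+1)) : ℂ)) • (S^(n+1-(q+1)) * M * S^(q+1))
          - ((-1:ℂ)^q * ((n.choose q) : ℂ)) • (S^(n-q) * M * S^(q+1)) := by
      intro q _
      have e1 : n+1-(q+1) = n-q := by omega
      rw [e1]
      have hc : (((n+1).choose (q+1)) : ℂ) = (n.choose (q+1) : ℂ) + (n.choose q : ℂ) := by
        rw [Nat.choose_succ_succ]; push_cast; ring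
      rw [hc, ← sub_smul]
      congr 1
      ring
    rw [Finset.sum_congr rfl hP, Finset.sum_sub_distrib]
    simp only [Nat.choose_zero_right, Nat.cast_one, pow_zero, one_mul, mul_one]
    abel


lemma norm_pow_mul_le {d : ℕ} (A B : Mat d) (p : ℕ) : ‖A^p * B‖ ≤ (d * ‖A‖)^p * ‖B‖ := by
  induction p with
  | zero => simp
  | succ p ih =>
    calc ‖A^(p+1) * B‖ = ‖A * (A^p * B)‖ := by rw [pow_succ']; rw [mul_assoc]
      _ ≤ d * ‖A‖ * ‖A^p * B‖ := mat_norm_mul d A _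
      _ ≤ d * ‖A‖ * ((d * ‖A‖)^p * ‖B‖) := by
          refine mul_le_mul_of_nonneg_left ih (by positivity)
      _ = (d * ‖A‖)^(p+1) * ‖B‖ := by ring

lemma norm_mul_pow_le {d : ℕ} (A B : Mat d) (q : ℕ) : ‖B * A^q‖ ≤ (d * ‖A‖)^q * ‖B‖ := by
  induction q with
  | zero => simp
  | succ q ih =>
    calc ‖B * A^(q+1)‖ = ‖(B * A^q) * A‖ := by rw [pow_succ, mul_assoc]
      _ ≤ d * ‖B * A^q‖ * ‖A‖ := mat_norm_mul d _ A
      _ ≤ d * ((d * ‖A‖)^q * ‖B‖) * ‖A‖ := by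
          refine mul_le_mul_of_nonneg_right (mul_le_mul_of_nonneg_left ih (by positivity)) (norm_nonneg _)
      _ = (d * ‖A‖)^(q+1) * ‖B‖ := by ring

lemma norm_triple {d : ℕ} (A B : Mat d) (p q : ℕ) :
    ‖A^p * B * A^q‖ ≤ (d * ‖A‖)^(p+q) * ‖B‖ := by
  calc ‖A^p * B * A^q‖ = ‖A^p * (B * A^q)‖ := by rw [mul_assoc]
    _ ≤ (d * ‖A‖)^p * ‖B * A^q‖ := norm_pow_mul_le A _ p
    _ ≤ (d * ‖A‖)^p * ((d * ‖A‖)^q * ‖B‖) := by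
        refine mul_le_mul_of_nonneg_left (norm_mul_pow_le A B q) (by positivity)
    _ = (d * ‖A‖)^(p+q) * ‖B‖ := by rw [pow_add]; ring

lemma hasDerivAt_matpow {d : ℕ} {c : ℝ → Mat d} {c' : Mat d} {t : ℝ}
    (hc : HasDerivAt c c' t) (n : ℕ) :
    HasDerivAt (fun s => c s ^ n) (∑ p ∈ range n, c t ^ p * c' * c t ^ (n-1-p)) t := by
  induction n with
  | zero =>
    simp only [pow_zero, Finset.range_zero, Finset.sum_empty]
    exact hasDerivAt_const t (1 : Mat d)
  | succ n ih =>
    have h := hasDerivAt_matmul ih hc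
    have e : (fun s => c s ^ n * c s) = fun s => c s ^ (n+1) := by
      funext s; rw [pow_succ]
    rw [e] at h
    convert h using 1
    rw [Finset.sum_range_succ, Finset.sum_mul]
    have e2 : ∀ p ∈ range n, (c t ^ p * c' * c t ^ (n-1-p)) * c t
        = c t ^ p * c' * c t ^ (n+1-1-p) := by
      intro p hp
      have hpn : p < n := mem_range.1 hp
      rw [mul_assoc, ← pow_succ, show n-1-p+1 = n+1-1-p from by omega]
    rw [Finset.sum_congr rfl e2]
    have e3 : c t ^ n * c' = c t ^ n * c' * c t ^ (n+1-1-n) := by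
      simp
    rw [← e3]


lemma mat_norm_one (d : ℕ) : ‖(1 : Mat d)‖ ≤ 1 := by
  refine (Matrix.norm_le_iff zero_le_one).2 fun i j => ?_
  by_cases h : i = j <;> simp [Matrix.one_apply, h]


lemma mat_norm_pow_le {d : ℕ} (A : Mat d) (p : ℕ) : ‖A^p‖ ≤ (d * ‖A‖)^p := by
  have h := norm_pow_mul_le A 1 p
  rw [mul_one] at h
  refine h.trans ?_
  have := mat_norm_one d
  nlinarith [pow_nonneg (by positivity : (0:ℝ) ≤ d * ‖A‖) p, norm_nonneg (1 : Mat d)]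


lemma per_n {d : ℕ} (S M : Mat d) (n : ℕ) :
    ∑ kl ∈ antidiagonal n,
        ((((kl.1+1).factorial : ℂ))⁻¹ • adPow S kl.1 M) * (((kl.2.factorial : ℂ))⁻¹ • S^kl.2)
      = (((n+1).factorial : ℂ))⁻¹ • ∑ ij ∈ antidiagonal n, S^ij.1 * M * S^ij.2 := by
  have expand : ∀ kl ∈ antidiagonal n,
      ((((kl.1+1).factorial : ℂ))⁻¹ • adPow S kl.1 M) * (((kl.2.factorial : ℂ))⁻¹ • S^kl.2)
      = ∑ p ∈ range (kl.1+1),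
          (((-1:ℂ)^p * ((kl.1).choose p)) / (((kl.1+1).factorial : ℂ) * ((kl.2.factorial : ℂ))))
            • (S^(kl.1-p) * M * S^(p+kl.2)) := by
    rintro ⟨k, m⟩ -
    simp only
    rw [adPow_eq, Finset.smul_sum, Finset.sum_mul]
    apply Finset.sum_congr rfl
    intro p hp
    rw [smul_smul, Algebra.smul_mul_assoc, Algebra.mul_smul_comm, smul_smul]
    rw [mul_assoc (S^(k-p) * M), ← pow_add]
    congr 1
    field_simp
  rw [Finset.sum_congr rfl expand]
  rw [← Finset.sum_sigma (antidiagonal n) (fun kl => range (kl.1+1))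
    (fun x => (((-1:ℂ)^x.2 * ((x.1.1).choose x.2)) /
      (((x.1.1+1).factorial : ℂ) * ((x.1.2.factorial : ℂ)))) • (S^(x.1.1-x.2) * M * S^(x.2+x.1.2)))]
  have bij : ∑ x ∈ (antidiagonal n).sigma (fun kl => range (kl.1+1)),
      (((-1:ℂ)^x.2 * ((x.1.1).choose x.2)) /
        (((x.1.1+1).factorial : ℂ) * ((x.1.2.factorial : ℂ)))) • (S^(x.1.1-x.2) * M * S^(x.2+x.1.2))
      = ∑ x ∈ (antidiagonal n).sigma (fun ij => range (ij.2+1)),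
      (((-1:ℂ)^x.2 * ((x.1.1+x.2).choose x.2)) /
        (((x.1.1+x.2+1).factorial : ℂ) * (((x.1.2-x.2).factorial : ℂ)))) • (S^x.1.1 * M * S^x.1.2) := by
    refine Finset.sum_nbij' (fun x => ⟨(x.1.1 - x.2, x.2 + x.1.2), x.2⟩)
      (fun x => ⟨(x.1.1 + x.2, x.1.2 - x.2), x.2⟩) ?_ ?_ ?_ ?_ ?_
    · rintro ⟨⟨k, m⟩, p⟩ hx
      simp only [Finset.mem_sigma, Finset.HasAntidiagonal.mem_antidiagonal, Finset.mem_range] at hx ⊢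
      omega
    · rintro ⟨⟨i, j⟩, p⟩ hx
      simp only [Finset.mem_sigma, Finset.HasAntidiagonal.mem_antidiagonal, Finset.mem_range] at hx ⊢
      omega
    · rintro ⟨⟨k, m⟩, p⟩ hx
      simp only [Finset.mem_sigma, Finset.HasAntidiagonal.mem_antidiagonal, Finset.mem_range] at hx
      simp only [Sigma.mk.inj_iff, Prod.mk.injEq]
      constructor
      · constructor <;> omega
      · rfl
    · rintro ⟨⟨i, j⟩, p⟩ hx
      simp only [Finset.mem_sigma, Finset.HasAntidiagonal.mem_antidiagonal, Finset.mem_range] at hx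
      simp only [Sigma.mk.inj_iff, Prod.mk.injEq]
      constructor
      · constructor <;> omega
      · rfl
    · rintro ⟨⟨k, m⟩, p⟩ hx
      simp only [Finset.mem_sigma, Finset.HasAntidiagonal.mem_antidiagonal, Finset.mem_range] at hx
      have e1 : k - p + p = k := by omega
      have e2 : p + m - p = m := by omega
      simp only [e1, e2]
  rw [bij, Finset.sum_sigma, Finset.smul_sum]
  apply Finset.sum_congr rfl
  rintro ⟨i, j⟩ hij
  simp only [Finset.HasAntidiagonal.mem_antidiagonal] at hij
  dsimp only
  rw [← Finset.sum_smul, coef_id i j, show i + j + 1 = n + 1 from by omega]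


section main
variable {d : ℕ} (S M : Mat d)

/-- summable exp-type bound -/
lemma summable_aux (x : ℝ) : Summable (fun n : ℕ => x^n / n.factorial * ‖M‖) :=
  (Real.summable_pow_div_factorial x).mul_right _

lemma key_deriv :
    HasDerivAt (fun t : ℝ => ∑' n : ℕ, ((n.factorial : ℂ))⁻¹ • (S + t • M)^n)
      (∑' n : ℕ, ((n.factorial : ℂ))⁻¹ • ∑ p ∈ range n, S^p * M * S^(n-1-p)) 0 := by
  set R : ℝ := ‖S‖ + ‖M‖ with hR
  have hR0 : 0 ≤ R := by positivity
  set g : ℕ → ℝ → Mat d := fun n t => ((n.factorial : ℂ))⁻¹ • (S + t • M)^n with hg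
  set g' : ℕ → ℝ → Mat d :=
    fun n t => ((n.factorial : ℂ))⁻¹ • ∑ p ∈ range n, (S + t•M)^p * M * (S + t•M)^(n-1-p) with hg'
  set u : ℕ → ℝ := fun n => n * (d*R)^(n-1) / n.factorial * ‖M‖ with hu
  have husum : Summable u := by
    rw [← summable_nat_add_iff 1]
    have : (fun n : ℕ => u (n+1)) = fun n : ℕ => (d*R)^n / n.factorial * ‖M‖ := by
      funext n
      simp only [hu, Nat.add_sub_cancel, Nat.factorial_succ]
      push_cast
      field_simp
    rw [this]
    exact summable_aux M (d*R)
  have hderiv : ∀ n : ℕ, ∀ t : ℝ, HasDerivAt (g n) (g' n t) t := by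
    intro n t
    have hc : HasDerivAt (fun s : ℝ => S + s • M) M t := by
      have := ((hasDerivAt_id' t).smul_const M).const_add S
      rwa [one_smul] at this
    exact (hasDerivAt_matpow hc n).const_smul ((n.factorial : ℂ))⁻¹
  have hbound : ∀ n : ℕ, ∀ t : ℝ, t ∈ Metric.ball (0:ℝ) 1 → ‖g' n t‖ ≤ u n := by
    intro n t ht
    have htle : ‖S + t • M‖ ≤ R := by
      refine (norm_add_le _ _).trans ?_
      have : ‖t • M‖ = |t| * ‖M‖ := by rw [norm_smul, Real.norm_eq_abs]
      rw [this]
      have h1 : |t| ≤ 1 := le_of_lt (by simpa [Real.dist_eq] using Metric.mem_ball.1 ht)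
      nlinarith [norm_nonneg M, norm_nonneg S]
    have hterm : ∀ p ∈ range n, ‖(S + t•M)^p * M * (S + t•M)^(n-1-p)‖ ≤ (d*R)^(n-1) * ‖M‖ := by
      intro p hp
      have hpn : p < n := mem_range.1 hp
      refine (norm_triple _ _ _ _).trans ?_
      have h1 : (d * ‖S + t•M‖)^(p + (n-1-p)) ≤ (d*R)^(n-1) := by
        have e : p + (n-1-p) = n-1 := by omega
        rw [e]
        exact pow_le_pow_left₀ (by positivity) (by nlinarith [Nat.cast_nonneg (α := ℝ) d]) _
      exact mul_le_mul_of_nonneg_right h1 (norm_nonneg _)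
    calc ‖g' n t‖ ≤ ‖((n.factorial : ℂ))⁻¹‖ * ‖∑ p ∈ range n, (S + t•M)^p * M * (S + t•M)^(n-1-p)‖ :=
          norm_smul_le _ _
      _ ≤ (n.factorial : ℝ)⁻¹ * (n * ((d*R)^(n-1) * ‖M‖)) := by
          refine mul_le_mul ?_ ?_ (norm_nonneg _) (by positivity)
          · rw [norm_inv]
            apply le_of_eq
            congr 1
            simp [Complex.norm_natCast]
          · refine (norm_sum_le _ _).trans ?_
            refine (Finset.sum_le_sum hterm).trans ?_
            simp [Finset.sum_const, card_range]
      _ = u n := by rw [hu]; field_simp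
  have hsum0 : Summable (fun n => g n (0:ℝ)) := by
    refine Summable.of_norm_bounded (Real.summable_pow_div_factorial (d * ‖S‖)) ?_
    intro n
    simp only [hg, zero_smul, add_zero]
    calc ‖((n.factorial : ℂ))⁻¹ • S^n‖ ≤ ‖((n.factorial : ℂ))⁻¹‖ * ‖S^n‖ := norm_smul_le _ _
      _ ≤ (n.factorial : ℝ)⁻¹ * (d*‖S‖)^n := by
          refine mul_le_mul ?_ (mat_norm_pow_le S n) (norm_nonneg _) (by positivity)
          rw [norm_inv]
          apply le_of_eq
          congr 1
          simp [Complex.norm_natCast]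
      _ = (d*‖S‖)^n / n.factorial := by ring
  have H := hasDerivAt_tsum_of_isPreconnected husum Metric.isOpen_ball
    (convex_ball (0:ℝ) 1).isPreconnected (fun n y _ => hderiv n y) hbound
    (Metric.mem_ball_self one_pos) hsum0 (Metric.mem_ball_self one_pos)
  convert H using 2 with n
  case e'_9.e'_5 => funext n; simp [hg']
  all_goals rfl
end main


section main
variable {d : ℕ} (S M : Mat d)

lemma adPow_norm (n : ℕ) : ‖adPow S n M‖ ≤ (2*d*‖S‖)^n * ‖M‖ := by
  induction n with
  | zero => simp [adPow]
  | succ n ih =>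
    have h1 : ‖adPow S (n+1) M‖ ≤ ‖S * adPow S n M‖ + ‖adPow S n M * S‖ := norm_sub_le _ _
    have h2 : ‖S * adPow S n M‖ ≤ d * ‖S‖ * ‖adPow S n M‖ := mat_norm_mul d _ _
    have h3 : ‖adPow S n M * S‖ ≤ d * ‖adPow S n M‖ * ‖S‖ := mat_norm_mul d _ _
    have h4 : (0:ℝ) ≤ d * ‖S‖ := by positivity
    have h5 : (0:ℝ) ≤ (2*d*‖S‖)^n := by positivity
    calc ‖adPow S (n+1) M‖ ≤ d * ‖S‖ * ‖adPow S n M‖ + d * ‖adPow S n M‖ * ‖S‖ := by linarith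
      _ = 2*d*‖S‖ * ‖adPow S n M‖ := by ring
      _ ≤ 2*d*‖S‖ * ((2*d*‖S‖)^n * ‖M‖) := by
          refine mul_le_mul_of_nonneg_left ih (by positivity)
      _ = (2*d*‖S‖)^(n+1) * ‖M‖ := by ring

lemma fact_inv_norm (k : ℕ) : ‖(((k+1).factorial : ℂ))⁻¹‖ ≤ ((k.factorial : ℝ))⁻¹ := by
  rw [norm_inv]
  have : ‖(((k+1).factorial : ℕ) : ℂ)‖ = (((k+1).factorial : ℕ) : ℝ) := by
    simp [Complex.norm_natCast]
  rw [this]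
  refine inv_anti₀ (by exact_mod_cast k.factorial_pos) ?_
  exact_mod_cast Nat.factorial_le (Nat.le_succ k)

lemma summable_f : Summable (fun k : ℕ => (((k+1).factorial : ℂ))⁻¹ • adPow S k M) := by
  refine Summable.of_norm_bounded ((Real.summable_pow_div_factorial (2*d*‖S‖)).mul_right ‖M‖) ?_
  intro k
  calc ‖(((k+1).factorial : ℂ))⁻¹ • adPow S k M‖
      ≤ ‖(((k+1).factorial : ℂ))⁻¹‖ * ‖adPow S k M‖ := norm_smul_le _ _
    _ ≤ ((k.factorial : ℝ))⁻¹ * ((2*d*‖S‖)^k * ‖M‖) := by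
        refine mul_le_mul (fact_inv_norm k) (adPow_norm S M k) (norm_nonneg _) (by positivity)
    _ = (2*d*‖S‖)^k / k.factorial * ‖M‖ := by ring

lemma summable_g : Summable (fun m : ℕ => ((m.factorial : ℂ))⁻¹ • S^m) := by
  refine Summable.of_norm_bounded (Real.summable_pow_div_factorial (d*‖S‖)) ?_
  intro m
  calc ‖((m.factorial : ℂ))⁻¹ • S^m‖ ≤ ‖((m.factorial : ℂ))⁻¹‖ * ‖S^m‖ := norm_smul_le _ _
    _ ≤ ((m.factorial : ℝ))⁻¹ * (d*‖S‖)^m := by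
        refine mul_le_mul ?_ (mat_norm_pow_le S m) (norm_nonneg _) (by positivity)
        rw [norm_inv]
        apply le_of_eq; congr 1; simp [Complex.norm_natCast]
    _ = (d*‖S‖)^m / m.factorial := by ring

lemma summable_fg : Summable (fun x : ℕ × ℕ =>
    ((((x.1+1).factorial : ℂ))⁻¹ • adPow S x.1 M) * (((x.2.factorial : ℂ))⁻¹ • S^x.2)) := by
  have ha : Summable (fun k : ℕ => (2*d*‖S‖)^k / k.factorial * ‖M‖) :=
    (Real.summable_pow_div_factorial (2*d*‖S‖)).mul_right ‖M‖
  have hb : Summable (fun m : ℕ => (d*‖S‖)^m / m.factorial) :=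
    Real.summable_pow_div_factorial (d*‖S‖)
  have hab := (ha.mul_of_nonneg hb (fun k => by positivity) (fun m => by positivity)).mul_left (d:ℝ)
  refine Summable.of_norm_bounded hab ?_
  rintro ⟨k, m⟩
  calc ‖((((k+1).factorial : ℂ))⁻¹ • adPow S k M) * (((m.factorial : ℂ))⁻¹ • S^m)‖
      ≤ d * ‖(((k+1).factorial : ℂ))⁻¹ • adPow S k M‖ * ‖((m.factorial : ℂ))⁻¹ • S^m‖ :=
        mat_norm_mul d _ _
    _ ≤ d * ((2*d*‖S‖)^k / k.factorial * ‖M‖) * ((d*‖S‖)^m / m.factorial) := by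
        have h1 : ‖(((k+1).factorial : ℂ))⁻¹ • adPow S k M‖ ≤ (2*d*‖S‖)^k / k.factorial * ‖M‖ := by
          calc ‖(((k+1).factorial : ℂ))⁻¹ • adPow S k M‖
              ≤ ‖(((k+1).factorial : ℂ))⁻¹‖ * ‖adPow S k M‖ := norm_smul_le _ _
            _ ≤ ((k.factorial : ℝ))⁻¹ * ((2*d*‖S‖)^k * ‖M‖) := by
                refine mul_le_mul (fact_inv_norm k) (adPow_norm S M k) (norm_nonneg _) (by positivity)
            _ = (2*d*‖S‖)^k / k.factorial * ‖M‖ := by ring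
        have h2 : ‖((m.factorial : ℂ))⁻¹ • S^m‖ ≤ (d*‖S‖)^m / m.factorial := by
          calc ‖((m.factorial : ℂ))⁻¹ • S^m‖ ≤ ‖((m.factorial : ℂ))⁻¹‖ * ‖S^m‖ := norm_smul_le _ _
            _ ≤ ((m.factorial : ℝ))⁻¹ * (d*‖S‖)^m := by
                refine mul_le_mul ?_ (mat_norm_pow_le S m) (norm_nonneg _) (by positivity)
                rw [norm_inv]
                apply le_of_eq; congr 1; simp [Complex.norm_natCast]
            _ = (d*‖S‖)^m / m.factorial := by ring
        have hd0 : (0:ℝ) ≤ d := Nat.cast_nonneg d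
        have := mul_le_mul (mul_le_mul_of_nonneg_left h1 hd0) h2 (norm_nonneg _) (by positivity)
        exact this
    _ = d * ((2*d*‖S‖)^k / k.factorial * ‖M‖ * ((d*‖S‖)^m / m.factorial)) := by ring

lemma summable_D : Summable
    (fun n : ℕ => ((n.factorial : ℂ))⁻¹ • ∑ p ∈ range n, S^p * M * S^(n-1-p)) := by
  have hu : Summable (fun n : ℕ => (n:ℝ) * (d*‖S‖)^(n-1) / n.factorial * ‖M‖) := by
    rw [← summable_nat_add_iff 1]
    have e : (fun n : ℕ => ((n+1:ℕ):ℝ) * (d*‖S‖)^(n+1-1) / (n+1).factorial * ‖M‖)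
        = fun n : ℕ => (d*‖S‖)^n / n.factorial * ‖M‖ := by
      funext n
      simp only [Nat.add_sub_cancel, Nat.factorial_succ]
      push_cast
      field_simp
    rw [e]
    exact (Real.summable_pow_div_factorial (d*‖S‖)).mul_right ‖M‖
  refine Summable.of_norm_bounded hu ?_
  intro n
  have hterm : ∀ p ∈ range n, ‖S^p * M * S^(n-1-p)‖ ≤ (d*‖S‖)^(n-1) * ‖M‖ := by
    intro p hp
    have hpn : p < n := mem_range.1 hp
    refine (norm_triple S M p (n-1-p)).trans ?_
    rw [show p + (n-1-p) = n-1 from by omega]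
  calc ‖((n.factorial : ℂ))⁻¹ • ∑ p ∈ range n, S^p * M * S^(n-1-p)‖
      ≤ ‖((n.factorial : ℂ))⁻¹‖ * ‖∑ p ∈ range n, S^p * M * S^(n-1-p)‖ := norm_smul_le _ _
    _ ≤ ((n.factorial : ℝ))⁻¹ * (n * ((d*‖S‖)^(n-1) * ‖M‖)) := by
        refine mul_le_mul ?_ ?_ (norm_nonneg _) (by positivity)
        · rw [norm_inv]
          apply le_of_eq; congr 1; simp [Complex.norm_natCast]
        · refine (norm_sum_le _ _).trans ?_
          refine (Finset.sum_le_sum hterm).trans ?_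
          simp [Finset.sum_const, card_range]
    _ = (n:ℝ) * (d*‖S‖)^(n-1) / n.factorial * ‖M‖ := by field_simp

lemma identity_part :
    (∑' n : ℕ, ((n.factorial : ℂ))⁻¹ • ∑ p ∈ range n, S^p * M * S^(n-1-p))
      = dexp S M * NormedSpace.exp S := by
  have hexp : NormedSpace.exp S = ∑' m : ℕ, ((m.factorial : ℂ))⁻¹ • S^m := by
    rw [NormedSpace.exp_eq_tsum ℂ]
  rw [hexp, dexp]
  rw [Summable.tsum_mul_tsum_eq_tsum_sum_antidiagonal (summable_f S M) (summable_g S) (summable_fg S M)]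
  have hD := summable_D S M
  rw [Summable.tsum_eq_zero_add hD]
  simp only [range_zero, Finset.sum_empty, smul_zero, zero_add]
  apply tsum_congr
  intro m
  rw [per_n S M m]
  congr 1
  rw [Finset.Nat.sum_antidiagonal_eq_sum_range_succ_mk (fun ij => S^ij.1 * M * S^ij.2) m]
  apply Finset.sum_congr rfl
  intro p hp
  simp only
  congr 2
end main


/-- The function `t ↦ e^{Σ + tM}` is differentiable at `t = 0` with
derivative `dexp_Σ(M) · e^Σ`. -/
theorem stmt2 (d : ℕ) (hd : 1 ≤ d) (S M : Mat d) :
    HasDerivAt (fun t : ℝ => NormedSpace.exp (S + t • M))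
      (dexp S M * NormedSpace.exp S) 0 := by
  have h := key_deriv S M
  rw [identity_part S M] at h
  have e : (fun t : ℝ => NormedSpace.exp (S + t • M))
      = fun t : ℝ => ∑' n : ℕ, ((n.factorial : ℂ))⁻¹ • (S + t • M)^n := by
    funext t
    rw [NormedSpace.exp_eq_tsum ℂ]
  rw [e]
  exact h
end
end

section
/- For every d ≥ 1 and all d×d complex matrices Σ, M, N, the following integral identity holds: ∫_0^1 τ · dexp_{τΣ}(N) · (e^{τΣ} M e^{−τΣ}) dτ = ∑_{n≥0} ∑_{m≥0} ad_Σ^n(N) · ad_Σ^m(M) / ((n+m+2)(n+1)! m!), the double series being absolutely convergent. -/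
noncomputable section

attribute [local instance] Matrix.normedAddCommGroup Matrix.normedSpace

namespace Aux
open NormedSpace
variable {d : ℕ}

@[reducible] def matTop : TopologicalSpace (Mat d) :=
  (Matrix.normedAddCommGroup : NormedAddCommGroup (Mat d)).toSeminormedAddCommGroup.toPseudoMetricSpace.toUniformSpace.toTopologicalSpace
attribute [local instance] matTop
instance matTopRing : IsTopologicalRing (Mat d) := Matrix.topologicalRing
instance clmRatAlgebra : NormedAlgebra ℚ (Mat d →L[ℂ] Mat d) :=
  NormedAlgebra.restrictScalars ℚ ℂ (Mat d →L[ℂ] Mat d)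

def lm (S : Mat d) : Mat d →L[ℂ] Mat d :=
  LinearMap.toContinuousLinearMap (LinearMap.mulLeft ℂ S)

def rm (S : Mat d) : Mat d →L[ℂ] Mat d :=
  LinearMap.toContinuousLinearMap (LinearMap.mulRight ℂ S)

@[simp] lemma lm_apply (S M : Mat d) : lm S M = S * M := rfl
@[simp] lemma rm_apply (S M : Mat d) : rm S M = M * S := rfl

def adL (S : Mat d) : Mat d →L[ℂ] Mat d := lm S - rm S

@[simp] lemma adL_apply (S M : Mat d) : adL S M = S * M - M * S := rfl

lemma lm_pow_apply (S M : Mat d) : ∀ n, ((lm S) ^ n) M = S ^ n * M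
  | 0 => by simp
  | n + 1 => by
    rw [pow_succ', ContinuousLinearMap.mul_apply, lm_pow_apply S M n, lm_apply,
      pow_succ', mul_assoc]

lemma rm_pow_apply (S M : Mat d) : ∀ n, ((rm S) ^ n) M = M * S ^ n
  | 0 => by simp
  | n + 1 => by
    rw [pow_succ, ContinuousLinearMap.mul_apply, rm_apply, rm_pow_apply S (M * S) n,
      mul_assoc, ← pow_succ']

lemma adPow_eq (S M : Mat d) : ∀ n, adPow S n M = ((adL S) ^ n) M
  | 0 => rfl
  | n + 1 => by
    rw [pow_succ', ContinuousLinearMap.mul_apply, ← adPow_eq S M n]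
    simp [adPow]

lemma exp_lm (S M : Mat d) : exp (lm S) M = exp S * M := by
  have h1 : HasSum (fun n => ((n.factorial : ℂ))⁻¹ • (lm S) ^ n) (exp (lm S)) :=
    exp_series_hasSum_exp' _
  have h3 : HasSum (fun n => ((n.factorial : ℂ))⁻¹ • (S ^ n * M)) (exp (lm S) M) := by
    simpa [lm_pow_apply, -pow_apply_eq_iterate] using h1.mapL (ContinuousLinearMap.apply ℂ (Mat d) M)
  have h4 : HasSum (fun n => ((n.factorial : ℂ))⁻¹ • S ^ n) (exp (lm S) 1) := by
    simpa [lm_pow_apply, -pow_apply_eq_iterate] using h1.mapL (ContinuousLinearMap.apply ℂ (Mat d) 1)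
  have h5 : HasSum (fun n => ((n.factorial : ℂ))⁻¹ • (S ^ n * M)) (exp (lm S) 1 * M) := by
    simpa [rm_apply] using h4.mapL (rm M)
  have h6 : exp S = exp (lm S) 1 := by
    rw [exp_eq_tsum ℂ]; exact h4.tsum_eq
  rw [h3.unique h5, h6]

lemma exp_rm (S M : Mat d) : exp (rm S) M = M * exp S := by
  have h1 : HasSum (fun n => ((n.factorial : ℂ))⁻¹ • (rm S) ^ n) (exp (rm S)) :=
    exp_series_hasSum_exp' _
  have h3 : HasSum (fun n => ((n.factorial : ℂ))⁻¹ • (M * S ^ n)) (exp (rm S) M) := by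
    simpa [rm_pow_apply, -pow_apply_eq_iterate] using h1.mapL (ContinuousLinearMap.apply ℂ (Mat d) M)
  have h4 : HasSum (fun n => ((n.factorial : ℂ))⁻¹ • S ^ n) (exp (rm S) 1) := by
    simpa [rm_pow_apply, -pow_apply_eq_iterate] using h1.mapL (ContinuousLinearMap.apply ℂ (Mat d) 1)
  have h5 : HasSum (fun n => ((n.factorial : ℂ))⁻¹ • (M * S ^ n)) (M * exp (rm S) 1) := by
    simpa [lm_apply] using h4.mapL (lm M)
  have h6 : exp S = exp (rm S) 1 := by
    rw [exp_eq_tsum ℂ]; exact h4.tsum_eq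
  rw [h3.unique h5, h6]

lemma exp_adL_apply (S M : Mat d) :
    exp (adL S) M = exp S * M * exp (-S) := by
  have hcomm : Commute (lm S) (-(rm S)) := by
    show lm S * -rm S = -rm S * lm S
    ext X
    simp [mul_assoc]
  have hsplit : adL S = lm S + -(rm S) := by rw [adL, sub_eq_add_neg]
  have hneg : -(rm S) = rm (-S) := by ext X; simp
  rw [hsplit, exp_add_of_commute hcomm, ContinuousLinearMap.mul_apply, hneg, exp_rm,
    exp_lm, mul_assoc]

lemma hasSum_conj (S M : Mat d) :
    HasSum (fun n => ((n.factorial : ℂ))⁻¹ • adPow S n M)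
      (exp S * M * exp (-S)) := by
  have h1 : HasSum (fun n => ((n.factorial : ℂ))⁻¹ • (adL S) ^ n) (exp (adL S)) :=
    exp_series_hasSum_exp' _
  have h2 := h1.mapL (ContinuousLinearMap.apply ℂ (Mat d) M)
  rw [show (ContinuousLinearMap.apply ℂ (Mat d) M) (exp (adL S)) = exp (adL S) M from rfl,
    exp_adL_apply] at h2
  simpa [adPow_eq] using h2

lemma opnorm_pow_le (A : Mat d →L[ℂ] Mat d) : ∀ n, ‖A ^ n‖ ≤ ‖A‖ ^ n
  | 0 => by rw [pow_zero, pow_zero]; exact ContinuousLinearMap.norm_id_le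
  | n + 1 => by
    rw [pow_succ, pow_succ]
    exact le_trans (norm_mul_le _ _)
      (mul_le_mul_of_nonneg_right (opnorm_pow_le A n) (norm_nonneg _))

lemma norm_adPow_le (S M : Mat d) (n : ℕ) : ‖adPow S n M‖ ≤ ‖adL S‖ ^ n * ‖M‖ := by
  rw [adPow_eq]
  exact le_trans (ContinuousLinearMap.le_opNorm _ _)
    (mul_le_mul_of_nonneg_right (opnorm_pow_le _ n) (norm_nonneg _))

lemma key_summable (S X : Mat d) (t : ℝ) (g : ℕ → ℂ)
    (hg : ∀ n, ‖g n‖ ≤ ((n.factorial : ℝ))⁻¹) :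
    Summable fun n => |t| ^ n * ‖g n • adPow S n X‖ := by
  refine Summable.of_nonneg_of_le (fun n => by positivity) (fun n => ?_)
    ((Real.summable_pow_div_factorial (|t| * ‖adL S‖)).mul_right ‖X‖)
  rw [norm_smul]
  calc |t| ^ n * (‖g n‖ * ‖adPow S n X‖)
      ≤ |t| ^ n * (((n.factorial : ℝ))⁻¹ * (‖adL S‖ ^ n * ‖X‖)) := by
        apply mul_le_mul_of_nonneg_left _ (by positivity)
        exact mul_le_mul (hg n) (norm_adPow_le S X n) (norm_nonneg _) (by positivity)
    _ = (|t| * ‖adL S‖) ^ n / n.factorial * ‖X‖ := by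
        rw [mul_pow]; field_simp

lemma adPow_smul (S M : Mat d) (t : ℝ) : ∀ n, adPow (t • S) n M = t ^ n • adPow S n M
  | 0 => by simp [adPow]
  | n + 1 => by
    simp only [adPow, adPow_smul S M t n, smul_mul_assoc, mul_smul_comm, smul_smul,
      ← smul_sub, pow_succ]
    rw [mul_comm (t ^ n) t, smul_sub]

def lmL : Mat d →L[ℂ] Mat d →L[ℂ] Mat d :=
  LinearMap.toContinuousLinearMap
    { toFun := lm
      map_add' := fun x y => by ext z; simp [add_mul]
      map_smul' := fun c x => by ext z; simp [smul_mul_assoc] }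

lemma norm_mul_le' (X Y : Mat d) : ‖X * Y‖ ≤ ‖(lmL (d := d))‖ * ‖X‖ * ‖Y‖ := by
  have h1 : X * Y = lmL X Y := rfl
  rw [h1]
  calc ‖lmL X Y‖ ≤ ‖lmL (d := d) X‖ * ‖Y‖ := ContinuousLinearMap.le_opNorm _ _
    _ ≤ ‖lmL (d := d)‖ * ‖X‖ * ‖Y‖ :=
        mul_le_mul_of_nonneg_right (ContinuousLinearMap.le_opNorm _ _) (norm_nonneg _)

def aT (S N : Mat d) (n : ℕ) : Mat d := (((n + 1).factorial : ℂ))⁻¹ • adPow S n N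
def bT (S M : Mat d) (m : ℕ) : Mat d := ((m.factorial : ℂ))⁻¹ • adPow S m M

lemma coeff_a_le (n : ℕ) : ‖(((n + 1).factorial : ℂ))⁻¹‖ ≤ ((n.factorial : ℝ))⁻¹ := by
  rw [norm_inv, Complex.norm_natCast]
  exact inv_anti₀ (by positivity) (Nat.cast_le.mpr (Nat.factorial_le (Nat.le_succ n)))

lemma coeff_b_le (n : ℕ) : ‖((n.factorial : ℂ))⁻¹‖ ≤ ((n.factorial : ℝ))⁻¹ := by
  rw [norm_inv, Complex.norm_natCast]

lemma summable_a_abs (S N : Mat d) (t : ℝ) : Summable fun n => |t| ^ n * ‖aT S N n‖ :=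
  key_summable S N t _ coeff_a_le

lemma summable_b_abs (S M : Mat d) (t : ℝ) : Summable fun n => |t| ^ n * ‖bT S M n‖ :=
  key_summable S M t _ coeff_b_le

lemma hasSum_a (S N : Mat d) (t : ℝ) :
    HasSum (fun n => t ^ n • aT S N n) (dexp (t • S) N) := by
  have hs : Summable fun n => t ^ n • aT S N n := by
    apply Summable.of_norm
    simpa [norm_smul, abs_pow] using summable_a_abs S N t
  have h := hs.hasSum
  have : dexp (t • S) N = ∑' n, t ^ n • aT S N n := by
    rw [dexp]
    exact tsum_congr fun n => by rw [adPow_smul, smul_comm, aT]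
  rw [this]
  exact h

lemma hasSum_b (S M : Mat d) (t : ℝ) :
    HasSum (fun m => t ^ m • bT S M m)
      (NormedSpace.exp (t • S) * M * NormedSpace.exp (-(t • S))) := by
  have h := hasSum_conj (t • S) M
  refine HasSum.congr_fun h fun m => ?_
  rw [adPow_smul, smul_comm, bT]

lemma summable_prod (S M N : Mat d) (t : ℝ) :
    Summable fun p : ℕ × ℕ => (t ^ p.1 • aT S N p.1) * (t ^ p.2 • bT S M p.2) := by
  apply Summable.of_norm
  refine Summable.of_nonneg_of_le (fun p => norm_nonneg _) (fun p => ?_)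
    (((summable_a_abs S N t).mul_of_nonneg (summable_b_abs S M t)
        (fun n => by positivity) (fun n => by positivity)).mul_left ‖(lmL (d := d))‖)
  calc ‖(t ^ p.1 • aT S N p.1) * (t ^ p.2 • bT S M p.2)‖
      ≤ ‖lmL (d := d)‖ * ‖t ^ p.1 • aT S N p.1‖ * ‖t ^ p.2 • bT S M p.2‖ := norm_mul_le' _ _
    _ = ‖lmL (d := d)‖ * (|t| ^ p.1 * ‖aT S N p.1‖ * (|t| ^ p.2 * ‖bT S M p.2‖)) := by
        rw [norm_smul, norm_smul, norm_pow, norm_pow, Real.norm_eq_abs]; ring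

lemma hasSum_pointwise (S M N : Mat d) (t : ℝ) :
    HasSum (fun p : ℕ × ℕ => t ^ (p.1 + p.2 + 1) • (aT S N p.1 * bT S M p.2))
      (t • (dexp (t • S) N *
        (NormedSpace.exp (t • S) * M * NormedSpace.exp (-(t • S))))) := by
  have h := ((hasSum_a S N t).mul (hasSum_b S M t) (summable_prod S M N t)).const_smul t
  refine HasSum.congr_fun h fun p => ?_
  rw [smul_mul_assoc, mul_smul_comm, smul_smul, smul_smul]
  congr 1
  ring

lemma term_eq (S M N : Mat d) (p : ℕ × ℕ) :
    (((p.1 + p.2 + 2 : ℕ) * (p.1 + 1).factorial * p.2.factorial : ℂ))⁻¹ •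
        (adPow S p.1 N * adPow S p.2 M) =
      (((p.1 : ℝ) + p.2 + 2))⁻¹ • (aT S N p.1 * bT S M p.2) := by
  rw [aT, bT, smul_mul_smul_comm, ← Complex.coe_smul, smul_smul]
  congr 1
  simp only [mul_inv, Complex.ofReal_inv]
  push_cast
  ring

lemma summable_norm_terms (S M N : Mat d) :
    Summable fun p : ℕ × ℕ =>
      ‖(((p.1 + p.2 + 2 : ℕ) * (p.1 + 1).factorial * p.2.factorial : ℂ))⁻¹ •
        (adPow S p.1 N * adPow S p.2 M)‖ := by
  have hA : Summable fun n => ‖aT S N n‖ := by simpa using summable_a_abs S N 1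
  have hB : Summable fun n => ‖bT S M n‖ := by simpa using summable_b_abs S M 1
  refine Summable.of_nonneg_of_le (fun p => norm_nonneg _) (fun p => ?_)
    ((hA.mul_of_nonneg hB (fun n => norm_nonneg _) (fun n => norm_nonneg _)).mul_left
      ‖(lmL (d := d))‖)
  rw [term_eq, norm_smul]
  have h1 : ‖(((p.1 : ℝ) + p.2 + 2))⁻¹‖ ≤ 1 := by
    rw [Real.norm_eq_abs, abs_inv, abs_of_nonneg (by positivity)]
    apply inv_le_one_of_one_le₀
    push_cast
    linarith [Nat.cast_nonneg (α := ℝ) p.1, Nat.cast_nonneg (α := ℝ) p.2]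
  calc ‖(((p.1 : ℝ) + p.2 + 2))⁻¹‖ * ‖aT S N p.1 * bT S M p.2‖
      ≤ 1 * ‖aT S N p.1 * bT S M p.2‖ :=
        mul_le_mul_of_nonneg_right h1 (norm_nonneg _)
    _ = ‖aT S N p.1 * bT S M p.2‖ := one_mul _
    _ ≤ ‖lmL (d := d)‖ * ‖aT S N p.1‖ * ‖bT S M p.2‖ := norm_mul_le' _ _
    _ = ‖lmL (d := d)‖ * (‖aT S N p.1‖ * ‖bT S M p.2‖) := by ring

open MeasureTheory in
lemma integral_F (S M N : Mat d) (p : ℕ × ℕ) :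
    ∫ τ in Set.Ioc (0:ℝ) 1, τ ^ (p.1 + p.2 + 1) • (aT S N p.1 * bT S M p.2) =
      (((p.1 : ℝ) + p.2 + 2))⁻¹ • (aT S N p.1 * bT S M p.2) := by
  rw [← intervalIntegral.integral_of_le zero_le_one,
    intervalIntegral.integral_smul_const, integral_pow]
  congr 1
  push_cast
  norm_num
  ring

open MeasureTheory in
lemma main_hasSum (S M N : Mat d) :
    HasSum (fun p : ℕ × ℕ =>
        (((p.1 + p.2 + 2 : ℕ) * (p.1 + 1).factorial * p.2.factorial : ℂ))⁻¹ •
          (adPow S p.1 N * adPow S p.2 M))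
      (∫ τ in (0:ℝ)..1,
        τ • (dexp (τ • S) N *
          (NormedSpace.exp (τ • S) * M * NormedSpace.exp (-(τ • S))))) := by
  have hA : Summable fun n => ‖aT S N n‖ := by simpa using summable_a_abs S N 1
  have hB : Summable fun n => ‖bT S M n‖ := by simpa using summable_b_abs S M 1
  set F : ℕ × ℕ → ℝ → Mat d :=
    fun p τ => τ ^ (p.1 + p.2 + 1) • (aT S N p.1 * bT S M p.2) with hF
  have hcont : ∀ p : ℕ × ℕ, Continuous (F p) :=
    fun p => (continuous_pow _).smul continuous_const
  have hint : ∀ p : ℕ × ℕ, Integrable (F p) (volume.restrict (Set.Ioc (0:ℝ) 1)) :=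
    fun p => (hcont p).integrableOn_Ioc
  have hnorm : Summable fun p : ℕ × ℕ => ∫ τ in Set.Ioc (0:ℝ) 1, ‖F p τ‖ := by
    refine Summable.of_nonneg_of_le
      (fun p => integral_nonneg fun τ => norm_nonneg _) (fun p => ?_)
      ((hA.mul_of_nonneg hB (fun n => norm_nonneg _) (fun n => norm_nonneg _)).mul_left
        ‖(lmL (d := d))‖)
    have hb : ∀ τ ∈ Set.Ioc (0:ℝ) 1, ‖‖F p τ‖‖ ≤ ‖aT S N p.1 * bT S M p.2‖ := by
      intro τ hτ
      rw [norm_norm, hF, norm_smul, norm_pow, Real.norm_eq_abs,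
        abs_of_nonneg (le_of_lt hτ.1)]
      calc τ ^ (p.1 + p.2 + 1) * ‖aT S N p.1 * bT S M p.2‖
          ≤ 1 * ‖aT S N p.1 * bT S M p.2‖ := by
            apply mul_le_mul_of_nonneg_right _ (norm_nonneg _)
            exact pow_le_one₀ (le_of_lt hτ.1) hτ.2
        _ = _ := one_mul _
    have := norm_setIntegral_le_of_norm_le_const (C := ‖aT S N p.1 * bT S M p.2‖)
      (by rw [Real.volume_Ioc]; exact ENNReal.ofReal_lt_top) hb
    calc ∫ τ in Set.Ioc (0:ℝ) 1, ‖F p τ‖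
        ≤ ‖∫ τ in Set.Ioc (0:ℝ) 1, ‖F p τ‖‖ := le_abs_self _
      _ ≤ ‖aT S N p.1 * bT S M p.2‖ * (volume (Set.Ioc (0:ℝ) 1)).toReal := this
      _ ≤ ‖lmL (d := d)‖ * (‖aT S N p.1‖ * ‖bT S M p.2‖) := by
          rw [Real.volume_Ioc]
          norm_num
          calc ‖aT S N p.1 * bT S M p.2‖
              ≤ ‖lmL (d := d)‖ * ‖aT S N p.1‖ * ‖bT S M p.2‖ := norm_mul_le' _ _
            _ = _ := by ring
  have h := hasSum_integral_of_summable_integral_norm hint hnorm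
  have heq : (fun τ => ∑' p : ℕ × ℕ, F p τ) =
      fun τ => τ • (dexp (τ • S) N *
        (NormedSpace.exp (τ • S) * M * NormedSpace.exp (-(τ • S)))) :=
    funext fun τ => (hasSum_pointwise S M N τ).tsum_eq
  rw [heq] at h
  rw [intervalIntegral.integral_of_le zero_le_one]
  refine HasSum.congr_fun ?_ fun p => (term_eq S M N p)
  have : (fun p : ℕ × ℕ => ∫ τ in Set.Ioc (0:ℝ) 1, F p τ) =
      fun p : ℕ × ℕ => (((p.1 : ℝ) + p.2 + 2))⁻¹ • (aT S N p.1 * bT S M p.2) :=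
    funext fun p => integral_F S M N p
  rwa [this] at h

end Aux


/-- `∫_0^1 τ · dexp_{τΣ}(N) · (e^{τΣ} M e^{−τΣ}) dτ
= ∑_{n,m≥0} ad_Σ^n(N) · ad_Σ^m(M) / ((n+m+2)(n+1)! m!)`, the double series being
absolutely convergent. -/
theorem stmt6 (d : ℕ) (hd : 1 ≤ d) (S M N : Mat d) :
    Summable (fun p : ℕ × ℕ =>
      ‖(((p.1 + p.2 + 2 : ℕ) * (p.1 + 1).factorial * p.2.factorial : ℂ))⁻¹ •
        (adPow S p.1 N * adPow S p.2 M)‖) ∧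
    HasSum (fun p : ℕ × ℕ =>
      (((p.1 + p.2 + 2 : ℕ) * (p.1 + 1).factorial * p.2.factorial : ℂ))⁻¹ •
        (adPow S p.1 N * adPow S p.2 M))
      (∫ τ in (0:ℝ)..1,
        τ • (dexp (τ • S) N *
          (NormedSpace.exp (τ • S) * M * NormedSpace.exp (-(τ • S))))) := by
  exact ⟨Aux.summable_norm_terms S M N, Aux.main_hasSum S M N⟩
end
end

section
/- (Baker, invertibility criterion) For every d ≥ 1 and every d×d complex matrix Σ, the linear operator dexp_Σ : M^{d×d} → M^{d×d}, dexp_Σ(M) = ∑_{n≥0} ad_Σ^n(M)/(n+1)!, is invertible if and only if no eigenvalue of the linear operator ad_Σ : M^{d×d} → M^{d×d} belongs to the set {2πim : m ∈ ℤ, m ≠ 0}. -/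
noncomputable section

/-- The adjoint operator `ad_Σ : M ↦ ΣM − MΣ` as a linear endomorphism of `M^{d×d}`. -/
def adLin {d : ℕ} (S : Mat d) : Module.End ℂ (Mat d) where
  toFun M := S * M - M * S
  map_add' x y := by noncomm_ring
  map_smul' c x := by
    simp only [RingHom.id_apply, Matrix.mul_smul, Matrix.smul_mul, smul_sub]

/-! ### Auxiliary scalar lemmas -/

/-- The entire function `φ(μ) = ∑ μ^n/(n+1)!`. -/
def phi (μ : ℂ) : ℂ := ∑' n : ℕ, (((n + 1).factorial : ℂ))⁻¹ * μ ^ n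

lemma summable_phi (μ : ℂ) :
    Summable (fun n : ℕ => (((n + 1).factorial : ℂ))⁻¹ * μ ^ n) := by
  apply Summable.of_norm_bounded (Real.summable_pow_div_factorial ‖μ‖)
  intro n
  rw [norm_mul, norm_inv, norm_pow, Complex.norm_natCast, div_eq_inv_mul]
  have h1 : ((n + 1).factorial : ℝ)⁻¹ ≤ (n.factorial : ℝ)⁻¹ := by
    apply inv_anti₀ (by positivity)
    exact_mod_cast Nat.factorial_le (Nat.le_succ n)
  exact mul_le_mul_of_nonneg_right h1 (by positivity)

lemma mul_phi (μ : ℂ) : μ * phi μ = Complex.exp μ - 1 := by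
  have hexp : Complex.exp μ = ∑' n : ℕ, μ ^ n / n.factorial := by
    rw [Complex.exp_eq_exp_ℂ, NormedSpace.exp_eq_tsum_div]
  have hsum : Summable (fun n : ℕ => μ ^ n / n.factorial) :=
    NormedSpace.expSeries_div_summable μ
  rw [hexp, Summable.tsum_eq_zero_add hsum]
  simp only [pow_zero, Nat.factorial_zero, Nat.cast_one, div_one]
  rw [add_sub_cancel_left, phi, ← tsum_mul_left]
  congr 1
  ext n
  rw [div_eq_inv_mul]
  ring

lemma phi_zero : phi 0 = 1 := by
  rw [phi, tsum_eq_single 0]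
  · simp
  · intro n hn
    simp [zero_pow hn]

lemma phi_eq_zero_iff (μ : ℂ) :
    phi μ = 0 ↔ ∃ m : ℤ, m ≠ 0 ∧ μ = 2 * Real.pi * Complex.I * m := by
  constructor
  · intro h
    have hμ : μ ≠ 0 := by
      rintro rfl
      rw [phi_zero] at h; exact one_ne_zero h
    have : Complex.exp μ = 1 := by
      have := mul_phi μ
      rw [h, mul_zero] at this
      linear_combination -this
    obtain ⟨n, hn⟩ := Complex.exp_eq_one_iff.1 this
    refine ⟨n, ?_, by rw [hn]; ring⟩
    rintro rfl
    simp at hn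
    exact hμ hn
  · rintro ⟨m, hm, rfl⟩
    have hμ : (2 * Real.pi * Complex.I * m : ℂ) ≠ 0 := by
      simp [Real.pi_ne_zero, Complex.I_ne_zero, hm]
    have hexp : Complex.exp (2 * Real.pi * Complex.I * m) = 1 := by
      rw [Complex.exp_eq_one_iff]
      exact ⟨m, by ring⟩
    have := mul_phi (2 * Real.pi * Complex.I * m)
    rw [hexp, sub_self] at this
    exact (mul_eq_zero.1 this).resolve_left hμ

/-! ### Auxiliary matrix lemmas -/

attribute [local instance] Matrix.linftyOpNormedAddCommGroup Matrix.linftyOpNormedSpace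
  Matrix.linftyOpNormedRing Matrix.linftyOpNormedAlgebra

variable {d : ℕ}

lemma norm_adPow_le (S : Mat d) (n : ℕ) (M : Mat d) :
    ‖adPow S n M‖ ≤ (2 * ‖S‖) ^ n * ‖M‖ := by
  induction n with
  | zero => simp [adPow]
  | succ n ih =>
    show ‖S * adPow S n M - adPow S n M * S‖ ≤ _
    calc ‖S * adPow S n M - adPow S n M * S‖
        ≤ ‖S * adPow S n M‖ + ‖adPow S n M * S‖ := norm_sub_le _ _
      _ ≤ ‖S‖ * ‖adPow S n M‖ + ‖adPow S n M‖ * ‖S‖ :=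
          add_le_add (norm_mul_le _ _) (norm_mul_le _ _)
      _ = 2 * ‖S‖ * ‖adPow S n M‖ := by ring
      _ ≤ 2 * ‖S‖ * ((2 * ‖S‖) ^ n * ‖M‖) :=
          mul_le_mul_of_nonneg_left ih (by positivity)
      _ = (2 * ‖S‖) ^ (n + 1) * ‖M‖ := by ring

lemma summable_dexp (S M : Mat d) :
    Summable (fun n : ℕ => (((n + 1).factorial : ℂ))⁻¹ • adPow S n M) := by
  apply Summable.of_norm_bounded
    ((Real.summable_pow_div_factorial (2 * ‖S‖)).mul_right ‖M‖)
  intro n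
  rw [norm_smul, norm_inv, Complex.norm_natCast]
  calc ((n + 1).factorial : ℝ)⁻¹ * ‖adPow S n M‖
      ≤ ((n).factorial : ℝ)⁻¹ * ((2 * ‖S‖) ^ n * ‖M‖) := by
        have h1 : ((n + 1).factorial : ℝ)⁻¹ ≤ ((n).factorial : ℝ)⁻¹ := by
          apply inv_anti₀ (by positivity)
          exact_mod_cast Nat.factorial_le (Nat.le_succ n)
        exact mul_le_mul h1 (norm_adPow_le S n M) (norm_nonneg _) (by positivity)
    _ = (2 * ‖S‖) ^ n / (n.factorial : ℝ) * ‖M‖ := by ring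

lemma adPow_add (S : Mat d) (n : ℕ) (M N : Mat d) :
    adPow S n (M + N) = adPow S n M + adPow S n N := by
  induction n with
  | zero => rfl
  | succ n ih =>
    show S * adPow S n (M + N) - adPow S n (M + N) * S =
      (S * adPow S n M - adPow S n M * S) + (S * adPow S n N - adPow S n N * S)
    rw [ih]; noncomm_ring

lemma adPow_smul (S : Mat d) (n : ℕ) (c : ℂ) (M : Mat d) :
    adPow S n (c • M) = c • adPow S n M := by
  induction n with
  | zero => rfl
  | succ n ih =>
    show S * adPow S n (c • M) - adPow S n (c • M) * S =
      c • (S * adPow S n M - adPow S n M * S)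
    rw [ih, Matrix.mul_smul, Matrix.smul_mul, smul_sub]

lemma dexp_add (S : Mat d) (M N : Mat d) :
    dexp S (M + N) = dexp S M + dexp S N := by
  unfold dexp
  rw [← ((summable_dexp S M).hasSum.add (summable_dexp S N).hasSum).tsum_eq]
  congr 1; ext n; rw [adPow_add, smul_add]

lemma dexp_smul (S : Mat d) (c : ℂ) (M : Mat d) :
    dexp S (c • M) = c • dexp S M := by
  unfold dexp
  rw [← Summable.tsum_const_smul c (summable_dexp S M)]
  congr 1; ext n; rw [adPow_smul, smul_comm]

lemma dexp_zero (S : Mat d) : dexp S (0 : Mat d) = 0 := by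
  have := dexp_smul S 0 0
  simpa using this

lemma adPow_apply_adLin (S : Mat d) (n : ℕ) (M : Mat d) :
    adPow S n (adLin S M) = adLin S (adPow S n M) := by
  induction n with
  | zero => rfl
  | succ n ih =>
    show S * adPow S n (adLin S M) - adPow S n (adLin S M) * S = _
    rw [ih]; rfl

lemma dexp_comm (S : Mat d) (M : Mat d) :
    dexp S (adLin S M) = adLin S (dexp S M) := by
  classical
  let A : Mat d →L[ℂ] Mat d := ⟨adLin S, (adLin S).continuous_of_finiteDimensional⟩
  have h : adLin S (dexp S M) = A (dexp S M) := rfl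
  rw [h]
  show (∑' n : ℕ, (((n + 1).factorial : ℂ))⁻¹ • adPow S n (adLin S M)) =
    A (∑' n : ℕ, (((n + 1).factorial : ℂ))⁻¹ • adPow S n M)
  rw [A.map_tsum (summable_dexp S M)]
  refine tsum_congr fun n => ?_
  rw [adPow_apply_adLin]
  exact (A.map_smul _ _).symm

lemma adPow_eigen (S : Mat d) {μ : ℂ} {M : Mat d} (h : adLin S M = μ • M) (n : ℕ) :
    adPow S n M = μ ^ n • M := by
  induction n with
  | zero => simp [adPow]
  | succ n ih =>
    show S * adPow S n M - adPow S n M * S = _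
    rw [ih, Matrix.mul_smul, Matrix.smul_mul, ← smul_sub]
    have : S * M - M * S = μ • M := h
    rw [this, smul_smul, pow_succ]

lemma dexp_eigen (S : Mat d) {μ : ℂ} {M : Mat d} (h : adLin S M = μ • M) :
    dexp S M = phi μ • M := by
  unfold dexp phi
  rw [← Summable.tsum_smul_const (summable_phi μ) M]
  congr 1; ext n
  rw [adPow_eigen S h n, smul_smul]

/-- Baker, invertibility criterion. The linear operator `dexp_Σ` is
invertible if and only if no eigenvalue of `ad_Σ` belongs to `{2πim : m ∈ ℤ, m ≠ 0}`. -/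
theorem stmt9 (d : ℕ) (hd : 1 ≤ d) (S : Mat d) :
    Function.Bijective (fun M : Mat d => dexp S M) ↔
      ∀ μ : ℂ, Module.End.HasEigenvalue (adLin S) μ →
        ∀ m : ℤ, m ≠ 0 → μ ≠ 2 * Real.pi * Complex.I * m := by
  classical
  let D : Module.End ℂ (Mat d) :=
    { toFun := fun M => dexp S M
      map_add' := dexp_add S
      map_smul' := fun c M => dexp_smul S c M }
  constructor
  · intro hbij μ hμ m hm heq
    obtain ⟨v, hv⟩ := hμ.exists_hasEigenvector
    have hrel : adLin S v = μ • v := hv.apply_eq_smul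
    have hphi : phi μ = 0 := (phi_eq_zero_iff μ).2 ⟨m, hm, heq⟩
    have hdv : dexp S v = 0 := by rw [dexp_eigen S hrel, hphi, zero_smul]
    have hv0 : v = 0 := by
      apply hbij.injective
      show dexp S v = dexp S 0
      rw [hdv, dexp_zero S]
    exact hv.2 hv0
  · intro h
    have hinj : Function.Injective (fun M : Mat d => dexp S M) := by
      by_contra hninj
      have hker : LinearMap.ker D ≠ ⊥ := fun hk => hninj (LinearMap.ker_eq_bot.1 hk)
      haveI : Nontrivial (LinearMap.ker D) := Submodule.nontrivial_iff_ne_bot.2 hker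
      have hstab : ∀ x ∈ LinearMap.ker D, adLin S x ∈ LinearMap.ker D := by
        intro x hx
        have hx0 : dexp S x = 0 := hx
        show dexp S (adLin S x) = 0
        rw [dexp_comm, hx0, map_zero]
      obtain ⟨μ, hμ⟩ := Module.End.exists_eigenvalue ((adLin S).restrict hstab)
      obtain ⟨v, hv⟩ := hμ.exists_hasEigenvector
      have hv1 : adLin S (v : Mat d) = μ • (v : Mat d) := by
        have h1 := congrArg (Subtype.val) hv.apply_eq_smul
        simpa [LinearMap.restrict_apply] using h1
      have hvne : (v : Mat d) ≠ 0 := by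
        simpa [Submodule.coe_eq_zero] using hv.2
      have heig : Module.End.HasEigenvalue (adLin S) μ :=
        Module.End.hasEigenvalue_of_hasEigenvector
          ⟨Module.End.mem_eigenspace_iff.2 hv1, hvne⟩
      have hdv : dexp S (v : Mat d) = 0 := v.2
      rw [dexp_eigen S hv1] at hdv
      have hphi : phi μ = 0 := by
        rcases smul_eq_zero.1 hdv with h' | h'
        · exact h'
        · exact absurd h' hvne
      obtain ⟨m, hm, hμeq⟩ := (phi_eq_zero_iff μ).1 hphi
      exact h μ heig m hm hμeq
    refine ⟨hinj, ?_⟩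
    have : Function.Surjective D := LinearMap.injective_iff_surjective.1 hinj
    exact this
end
end

section
/- (Baker, inversion formula) Let d ≥ 1 and let Σ be a d×d complex matrix with spectral norm ‖Σ‖ < π. Then the operator dexp_Σ(M) = ∑_{n≥0} ad_Σ^n(M)/(n+1)! is invertible and its inverse is given by the convergent series dexp_Σ^{−1}(M) = ∑_{k≥0} (β_k/k!) ad_Σ^k(M) for all M ∈ M^{d×d}, where β_k are the Bernoulli numbers; that is, dexp_Σ( ∑_{k≥0} (β_k/k!) ad_Σ^k(M) ) = M and ∑_{k≥0} (β_k/k!) ad_Σ^k( dexp_Σ(M) ) = M for every M. -/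
noncomputable section
set_option maxHeartbeats 1000000
set_option synthInstance.maxHeartbeats 400000
set_option linter.unusedSectionVars false

/-- The spectral norm: the operator norm of `M` acting on `ℂ^d` with the Euclidean norm. -/
def specNorm {d : ℕ} (M : Mat d) : ℝ :=
  ‖Matrix.toEuclideanCLM (𝕜 := ℂ) M‖

/-- `∑_{k≥0} (β_k/k!) ad_Σ^k(M)`, where `β_k` are the Bernoulli numbers (with `β₁ = −1/2`). -/
def dexpInv {d : ℕ} (S M : Mat d) : Mat d :=
  ∑' k : ℕ, ((bernoulli k : ℂ) / (k.factorial : ℂ)) • adPow S k M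

open Real Filter Finset

/-! ### Scalar coefficient identity -/

lemma coeffIdQ (n : ℕ) :
    ∑ p ∈ Finset.HasAntidiagonal.antidiagonal n,
      ((bernoulli p.1 : ℚ) / p.1.factorial) * (((p.2+1).factorial : ℚ))⁻¹
      = if n = 0 then 1 else 0 := by
  have h := congrArg (PowerSeries.coeff (R := ℚ) (n+1)) (bernoulliPowerSeries_mul_exp_sub_one ℚ)
  rw [PowerSeries.coeff_mul, Finset.Nat.sum_antidiagonal_succ', PowerSeries.coeff_X] at h
  simp only [bernoulliPowerSeries, PowerSeries.coeff_mk, map_sub, PowerSeries.coeff_exp,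
    PowerSeries.coeff_one, Algebra.algebraMap_self, RingHom.id_apply, Nat.factorial_zero,
    Nat.cast_one, Nat.succ_ne_zero, if_false, Nat.add_eq_zero, and_false, sub_zero,
    one_div] at h
  simpa using h

/-! ### Bernoulli number bounds -/

lemma zeta_le_two {m : ℕ} (hm : 1 ≤ m) :
    (∑' n : ℕ, 1 / (n : ℝ) ^ (2 * m)) ≤ 2 := by
  have h2 : HasSum (fun n : ℕ => 1 / (n : ℝ) ^ (2*1)) (π ^ 2 / 6) := by
    simpa using hasSum_zeta_two
  have hm' : HasSum (fun n : ℕ => 1 / (n : ℝ) ^ (2 * m)) _ := hasSum_zeta_nat (by omega)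
  have hle : (∑' n : ℕ, 1 / (n : ℝ) ^ (2 * m)) ≤ ∑' n : ℕ, 1 / (n : ℝ) ^ (2*1) := by
    refine Summable.tsum_le_tsum (fun n => ?_) hm'.summable h2.summable
    rcases Nat.eq_zero_or_pos n with rfl | hn
    · rw [Nat.cast_zero, zero_pow (by omega : 2*m ≠ 0), zero_pow (by norm_num : (2*1) ≠ 0)]
    · apply one_div_le_one_div_of_le
      · positivity
      · exact pow_le_pow_right₀ (by exact_mod_cast hn) (by omega)
  rw [h2.tsum_eq] at hle
  nlinarith [pi_lt_d2, pi_pos, hle]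

lemma bern_bound {m : ℕ} (hm : 1 ≤ m) :
    |(bernoulli (2*m) : ℝ)| / (2*m).factorial ≤ 4 / (2*π)^(2*m) := by
  have hz := hasSum_zeta_nat (k := m) (by omega)
  set B : ℝ := (bernoulli (2*m) : ℝ) with hB
  set S : ℝ := ∑' n : ℕ, 1 / (n : ℝ) ^ (2 * m) with hSdef
  have hS : S = (-1 : ℝ) ^ (m + 1) * 2 ^ (2 * m - 1) * π ^ (2 * m) * B / (2 * m).factorial :=
    hz.tsum_eq
  have hSnn : 0 ≤ S := tsum_nonneg (fun n => by positivity)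
  have h1 : 2 ^ (2*m-1) * π ^ (2*m) * |B| / (2*m).factorial = S := by
    rw [← abs_of_nonneg hSnn, hS]
    rw [abs_div, abs_mul, abs_mul, abs_mul, abs_pow, abs_pow, abs_pow, abs_neg, abs_one,
      one_pow, one_mul, abs_of_nonneg pi_pos.le, abs_two,
      abs_of_nonneg (by positivity : (0:ℝ) ≤ ((2*m).factorial : ℝ))]
  have hSle : S ≤ 2 := zeta_le_two hm
  have hpow : (2*π) ^ (2*m) = 2 * (2 ^ (2*m-1) * π ^ (2*m)) := by
    rw [mul_pow]
    have : (2:ℝ) ^ (2*m) = 2 * 2 ^ (2*m-1) := by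
      rw [← pow_succ']
      congr 1
      omega
    rw [this]; ring
  have hc : (0:ℝ) < 2 ^ (2*m-1) * π ^ (2*m) := by positivity
  rw [div_le_div_iff₀ (by positivity) (by positivity), hpow]
  have h2 : 2 ^ (2*m-1) * π ^ (2*m) * |B| ≤ 2 * ((2*m).factorial : ℝ) := by
    have hfp : (0:ℝ) < ((2*m).factorial : ℝ) := by positivity
    have := h1 ▸ hSle
    calc 2 ^ (2*m-1) * π ^ (2*m) * |B|
        = (2 ^ (2*m-1) * π ^ (2*m) * |B| / (2*m).factorial) * (2*m).factorial := by
          field_simp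
      _ ≤ 2 * ((2*m).factorial : ℝ) := by
          apply mul_le_mul_of_nonneg_right this hfp.le
  nlinarith [abs_nonneg B, hc, h2]

lemma summable_bern {r : ℝ} (hr0 : 0 ≤ r) (hr : r < 2*π) :
    Summable (fun k : ℕ => |(bernoulli k : ℝ)| / k.factorial * r ^ k) := by
  have hq0 : 0 ≤ r / (2*π) := by positivity
  have hq1 : r / (2*π) < 1 := (div_lt_one (by positivity)).mpr hr
  have geo : Summable (fun k : ℕ => 4 * (r / (2*π))^k) :=
    (summable_geometric_of_lt_one hq0 hq1).mul_left 4
  refine geo.of_norm_bounded_eventually_nat ?_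
  filter_upwards [eventually_ge_atTop 2] with k hk
  have hknn : (0:ℝ) ≤ |(bernoulli k : ℝ)| / k.factorial * r ^ k := by positivity
  rw [Real.norm_eq_abs, abs_of_nonneg hknn]
  rcases Nat.even_or_odd k with he | ho
  · obtain ⟨m, rfl⟩ := he
    have hm : 1 ≤ m := by omega
    have h2m : m + m = 2 * m := by ring
    rw [h2m]
    calc |(bernoulli (2*m) : ℝ)| / (2*m).factorial * r ^ (2*m)
        ≤ 4 / (2*π)^(2*m) * r ^ (2*m) := by
          apply mul_le_mul_of_nonneg_right (bern_bound hm) (by positivity)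
      _ = 4 * (r / (2*π))^(2*m) := by
          rw [div_pow]; field_simp
  · have hb : bernoulli k = 0 := by
      rw [bernoulli_eq_bernoulli'_of_ne_one (by omega)]
      exact bernoulli'_eq_zero_of_odd ho (by omega)
    rw [hb]
    simp
    positivity

/-! ### The abstract Banach-algebra statement -/

section Banach
variable {A : Type*} [NormedRing A] [NormedAlgebra ℂ A] [CompleteSpace A]

/-- `ad_x` as a continuous linear map. -/
def adC (x : A) : A →L[ℂ] A :=
  ContinuousLinearMap.mul ℂ A x - (ContinuousLinearMap.mul ℂ A).flip x

lemma adC_apply (x a : A) : adC x a = x * a - a * x := rfl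

lemma norm_adC_le (x : A) : ‖adC x‖ ≤ 2 * ‖x‖ := by
  refine ContinuousLinearMap.opNorm_le_bound _ (by positivity) (fun a => ?_)
  rw [adC_apply]
  calc ‖x * a - a * x‖ ≤ ‖x * a‖ + ‖a * x‖ := norm_sub_le _ _
    _ ≤ ‖x‖ * ‖a‖ + ‖a‖ * ‖x‖ := add_le_add (norm_mul_le _ _) (norm_mul_le _ _)
    _ = 2 * ‖x‖ * ‖a‖ := by ring

lemma norm_pow_le_CLM (T : A →L[ℂ] A) (n : ℕ) : ‖T ^ n‖ ≤ ‖T‖ ^ n := by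
  induction n with
  | zero => rw [pow_zero, pow_zero]; exact ContinuousLinearMap.norm_id_le
  | succ n ih =>
      rw [pow_succ, pow_succ]
      calc ‖T ^ n * T‖ ≤ ‖T ^ n‖ * ‖T‖ := norm_mul_le _ _
        _ ≤ ‖T‖ ^ n * ‖T‖ := mul_le_mul_of_nonneg_right ih (norm_nonneg _)

lemma normF_summable (x : A) :
    Summable (fun n : ℕ => ‖((((n+1).factorial : ℂ))⁻¹) • (adC x) ^ n‖) := by
  refine Summable.of_nonneg_of_le (fun n => norm_nonneg _) (fun n => ?_)
    (Real.summable_pow_div_factorial ‖adC x‖)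
  rw [show ‖((((n+1).factorial : ℂ))⁻¹) • (adC x) ^ n‖
      = ‖(((n+1).factorial : ℂ))⁻¹‖ * ‖(adC x) ^ n‖ from
      norm_smul ((((n+1).factorial : ℂ))⁻¹) ((adC x) ^ n)]
  have h1 : ‖(((n+1).factorial : ℂ))⁻¹‖ ≤ (n.factorial : ℝ)⁻¹ := by
    rw [norm_inv, Complex.norm_natCast]
    apply inv_anti₀ (by positivity)
    exact_mod_cast Nat.factorial_le (by omega)
  calc ‖(((n+1).factorial : ℂ))⁻¹‖ * ‖(adC x) ^ n‖
      ≤ (n.factorial : ℝ)⁻¹ * ‖adC x‖ ^ n :=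
        mul_le_mul h1 (norm_pow_le_CLM _ n) (norm_nonneg _) (by positivity)
    _ = ‖adC x‖ ^ n / n.factorial := by ring

lemma normG_summable {x : A} (hx : ‖x‖ < π) :
    Summable (fun k : ℕ => ‖((bernoulli k : ℂ) / (k.factorial : ℂ)) • (adC x) ^ k‖) := by
  have h2x : 2 * ‖x‖ < 2 * π := by linarith
  refine Summable.of_nonneg_of_le (fun n => norm_nonneg _) (fun k => ?_)
    (summable_bern (by positivity) h2x)
  rw [show ‖((bernoulli k : ℂ) / (k.factorial : ℂ)) • (adC x) ^ k‖
      = ‖((bernoulli k : ℂ) / (k.factorial : ℂ))‖ * ‖(adC x) ^ k‖ from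
      norm_smul ((bernoulli k : ℂ) / (k.factorial : ℂ)) ((adC x) ^ k)]
  have h1 : ‖((bernoulli k : ℂ) / (k.factorial : ℂ))‖ = |(bernoulli k : ℝ)| / k.factorial := by
    rw [norm_div, Complex.norm_natCast]
    congr 1
    rw [show ((bernoulli k : ℂ)) = (((bernoulli k : ℝ)) : ℂ) by push_cast; ring,
      Complex.norm_real, Real.norm_eq_abs]
  rw [h1]
  have h2 : ‖(adC x) ^ k‖ ≤ (2 * ‖x‖) ^ k :=
    (norm_pow_le_CLM _ k).trans (pow_le_pow_left₀ (norm_nonneg _) (norm_adC_le x) k)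
  exact mul_le_mul_of_nonneg_left h2 (by positivity)

lemma term_smul (x : A) (a b : ℂ) (i j : ℕ) :
    (a • (adC x) ^ i) * (b • (adC x) ^ j) = (a * b) • (adC x) ^ (i + j) := by
  rw [pow_add]
  ext v
  simp [ContinuousLinearMap.mul_apply, map_smul, smul_smul, mul_comm]

lemma coeffIdC (n : ℕ) :
    ∑ p ∈ Finset.HasAntidiagonal.antidiagonal n,
      ((bernoulli p.1 : ℂ) / (p.1.factorial : ℂ)) * (((p.2+1).factorial : ℂ))⁻¹
      = if n = 0 then 1 else 0 := by
  calc ∑ p ∈ Finset.HasAntidiagonal.antidiagonal n,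
        ((bernoulli p.1 : ℂ) / (p.1.factorial : ℂ)) * (((p.2+1).factorial : ℂ))⁻¹
      = ((∑ p ∈ Finset.HasAntidiagonal.antidiagonal n,
          ((bernoulli p.1 : ℚ) / p.1.factorial) * (((p.2+1).factorial : ℚ))⁻¹ : ℚ) : ℂ) := by
        push_cast; rfl
    _ = ((if n = 0 then (1:ℚ) else 0 : ℚ) : ℂ) := by rw [coeffIdQ n]
    _ = (if n = 0 then (1:ℂ) else 0) := by split <;> simp

lemma tsum_ite_smul (x : A) :
    (∑' n : ℕ, (if n = 0 then (1:ℂ) else 0) • (adC x) ^ n) = 1 := by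
  have hz : ∀ n : ℕ, n ≠ 0 → (if n = 0 then (1:ℂ) else 0) • (adC x) ^ n = 0 := by
    intro n hn
    rw [if_neg hn]
    exact zero_smul ℂ ((adC x) ^ n)
  rw [tsum_eq_single 0 hz, if_pos rfl, pow_zero]
  exact one_smul ℂ (1 : A →L[ℂ] A)

lemma key_mul {x : A} (hx : ‖x‖ < π) :
    (∑' k : ℕ, ((bernoulli k : ℂ) / (k.factorial : ℂ)) • (adC x) ^ k) *
      (∑' n : ℕ, ((((n+1).factorial : ℂ))⁻¹) • (adC x) ^ n) = 1 := by
  rw [tsum_mul_tsum_eq_tsum_sum_antidiagonal_of_summable_norm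
    (f := fun k : ℕ => ((bernoulli k : ℂ) / (k.factorial : ℂ)) • (adC x) ^ k)
    (g := fun n : ℕ => ((((n+1).factorial : ℂ))⁻¹) • (adC x) ^ n)
    (normG_summable hx) (normF_summable x)]
  have hterm : ∀ n : ℕ, ∑ p ∈ Finset.HasAntidiagonal.antidiagonal n,
      (((bernoulli p.1 : ℂ) / (p.1.factorial : ℂ)) • (adC x) ^ p.1) *
        (((((p.2+1).factorial : ℂ))⁻¹) • (adC x) ^ p.2)
      = (if n = 0 then (1:ℂ) else 0) • (adC x) ^ n := by
    intro n
    have : ∀ p ∈ Finset.HasAntidiagonal.antidiagonal n,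
        (((bernoulli p.1 : ℂ) / (p.1.factorial : ℂ)) • (adC x) ^ p.1) *
          (((((p.2+1).factorial : ℂ))⁻¹) • (adC x) ^ p.2)
        = (((bernoulli p.1 : ℂ) / (p.1.factorial : ℂ)) * ((((p.2+1).factorial : ℂ))⁻¹))
            • (adC x) ^ n := by
      intro p hp
      rw [term_smul, Finset.HasAntidiagonal.mem_antidiagonal.mp hp]
    rw [Finset.sum_congr rfl this, ← Finset.sum_smul, coeffIdC n]
  rw [tsum_congr hterm]
  exact tsum_ite_smul x

lemma key_mul' {x : A} (hx : ‖x‖ < π) :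
    (∑' n : ℕ, ((((n+1).factorial : ℂ))⁻¹) • (adC x) ^ n) *
      (∑' k : ℕ, ((bernoulli k : ℂ) / (k.factorial : ℂ)) • (adC x) ^ k) = 1 := by
  rw [tsum_mul_tsum_eq_tsum_sum_antidiagonal_of_summable_norm
    (f := fun n : ℕ => ((((n+1).factorial : ℂ))⁻¹) • (adC x) ^ n)
    (g := fun k : ℕ => ((bernoulli k : ℂ) / (k.factorial : ℂ)) • (adC x) ^ k)
    (normF_summable x) (normG_summable hx)]
  have hterm : ∀ n : ℕ, ∑ p ∈ Finset.HasAntidiagonal.antidiagonal n,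
      (((((p.1+1).factorial : ℂ))⁻¹) • (adC x) ^ p.1) *
        (((bernoulli p.2 : ℂ) / (p.2.factorial : ℂ)) • (adC x) ^ p.2)
      = (if n = 0 then (1:ℂ) else 0) • (adC x) ^ n := by
    intro n
    have h1 : ∀ p ∈ Finset.HasAntidiagonal.antidiagonal n,
        (((((p.1+1).factorial : ℂ))⁻¹) • (adC x) ^ p.1) *
          (((bernoulli p.2 : ℂ) / (p.2.factorial : ℂ)) • (adC x) ^ p.2)
        = (((((p.1+1).factorial : ℂ))⁻¹) * ((bernoulli p.2 : ℂ) / (p.2.factorial : ℂ)))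
            • (adC x) ^ n := by
      intro p hp
      rw [term_smul, Finset.HasAntidiagonal.mem_antidiagonal.mp hp]
    rw [Finset.sum_congr rfl h1, ← Finset.sum_smul]
    have h2 : ∑ p ∈ Finset.HasAntidiagonal.antidiagonal n,
        ((((p.1+1).factorial : ℂ))⁻¹) * ((bernoulli p.2 : ℂ) / (p.2.factorial : ℂ))
        = ∑ p ∈ Finset.HasAntidiagonal.antidiagonal n,
          ((bernoulli p.1 : ℂ) / (p.1.factorial : ℂ)) * (((p.2+1).factorial : ℂ))⁻¹ := by
      rw [← Finset.Nat.sum_antidiagonal_swap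
        (f := fun p : ℕ × ℕ =>
          ((bernoulli p.1 : ℂ) / (p.1.factorial : ℂ)) * (((p.2+1).factorial : ℂ))⁻¹)]
      exact Finset.sum_congr rfl (fun p _ => by simp [Prod.swap, mul_comm])
    rw [h2, coeffIdC n]
  rw [tsum_congr hterm]
  exact tsum_ite_smul x

end Banach

/-- Baker, inversion formula. If `‖Σ‖ < π` in spectral norm, then the
series `∑_{k≥0} (β_k/k!) ad_Σ^k(M)` converges and is a two-sided inverse of `dexp_Σ`. -/
theorem stmt10 (d : ℕ) (hd : 1 ≤ d) (S : Mat d) (hS : specNorm S < Real.pi) :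
    ∀ M : Mat d,
      Summable (fun k : ℕ => ((bernoulli k : ℂ) / (k.factorial : ℂ)) • adPow S k M) ∧
      dexp S (dexpInv S M) = M ∧
      dexpInv S (dexp S M) = M := by
  intro M
  let E := EuclideanSpace ℂ (Fin d)
  let φ := Matrix.toEuclideanCLM (𝕜 := ℂ) (n := Fin d)
  set x : E →L[ℂ] E := φ S with hxdef
  have hx : ‖x‖ < Real.pi := hS
  -- transfer of the iterated adjoint
  have hφad : ∀ (n : ℕ) (N : Mat d), φ (adPow S n N) = ((adC x) ^ n) (φ N) := by
    intro n
    induction n with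
    | zero =>
        intro N
        simp [adPow, pow_zero]
    | succ n ih =>
        intro N
        show φ (S * adPow S n N - adPow S n N * S) = _
        rw [map_sub, map_mul, map_mul, ih, pow_succ']
        rfl
  -- continuous linear map versions of `φ` and `φ.symm`
  have : FiniteDimensional ℂ (Mat d) := inferInstance
  let ψ : Mat d →L[ℂ] (E →L[ℂ] E) := LinearMap.toContinuousLinearMap
    { toFun := φ, map_add' := fun a b => map_add φ a b,
      map_smul' := fun c a => map_smul φ c a }
  let ψi : (E →L[ℂ] E) →L[ℂ] Mat d := LinearMap.toContinuousLinearMap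
    { toFun := φ.symm, map_add' := fun a b => map_add φ.symm a b,
      map_smul' := fun c a => map_smul φ.symm c a }
  have hψ : ∀ N : Mat d, ψ N = φ N := fun N => rfl
  have hψi : ∀ v : E →L[ℂ] E, ψi v = φ.symm v := fun v => rfl
  -- the main transfer step
  have main : ∀ (c : ℕ → ℂ), (Summable fun k => ‖c k • (adC x) ^ k‖) → ∀ N : Mat d,
      Summable (fun k => c k • adPow S k N) ∧
      φ (∑' k, c k • adPow S k N) = (∑' k, c k • (adC x) ^ k) (φ N) := by
    intro c hc N
    have hop : Summable (fun k => c k • (adC x) ^ k) := hc.of_norm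
    have hA : Summable (fun k => (c k • (adC x) ^ k) (φ N)) := by
      have := hop.map (ContinuousLinearMap.apply ℂ (E →L[ℂ] E) (φ N))
        (ContinuousLinearMap.apply ℂ (E →L[ℂ] E) (φ N)).continuous
      exact this
    have hfe : ∀ k, c k • adPow S k N = φ.symm ((c k • (adC x) ^ k) (φ N)) := by
      intro k
      rw [ContinuousLinearMap.smul_apply, ← hφad k N, map_smul φ.symm,
        StarAlgEquiv.symm_apply_apply]
    have hsum : Summable (fun k => c k • adPow S k N) := by
      have h2 := hA.map ψi ψi.continuous
      refine h2.congr (fun k => ?_)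
      show ψi ((c k • (adC x) ^ k) (φ N)) = c k • adPow S k N
      rw [hψi, ← hfe k]
    refine ⟨hsum, ?_⟩
    calc φ (∑' k, c k • adPow S k N)
        = ψ (∑' k, c k • adPow S k N) := rfl
      _ = ∑' k, ψ (c k • adPow S k N) := ψ.map_tsum hsum
      _ = ∑' k, (c k • (adC x) ^ k) (φ N) := by
          refine tsum_congr (fun k => ?_)
          rw [hψ, hfe k, StarAlgEquiv.apply_symm_apply]
      _ = (∑' k, c k • (adC x) ^ k) (φ N) := by
          have := (ContinuousLinearMap.apply ℂ (E →L[ℂ] E) (φ N)).map_tsum hop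
          exact this.symm
  obtain ⟨hsumG, hφG⟩ := main (fun k => (bernoulli k : ℂ) / (k.factorial : ℂ))
    (normG_summable hx) M
  refine ⟨hsumG, ?_, ?_⟩
  · apply φ.injective
    obtain ⟨_, hφF⟩ := main (fun n => (((n + 1).factorial : ℂ))⁻¹) (normF_summable x)
      (dexpInv S M)
    calc φ (dexp S (dexpInv S M))
        = (∑' n : ℕ, ((((n+1).factorial : ℂ))⁻¹) • (adC x) ^ n) (φ (dexpInv S M)) := hφF
      _ = (∑' n : ℕ, ((((n+1).factorial : ℂ))⁻¹) • (adC x) ^ n)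
            ((∑' k : ℕ, ((bernoulli k : ℂ) / (k.factorial : ℂ)) • (adC x) ^ k) (φ M)) := by
          have h' : φ (dexpInv S M) =
              (∑' k : ℕ, ((bernoulli k : ℂ) / (k.factorial : ℂ)) • (adC x) ^ k) (φ M) := hφG
          rw [h']
      _ = (((∑' n : ℕ, ((((n+1).factorial : ℂ))⁻¹) • (adC x) ^ n) *
            (∑' k : ℕ, ((bernoulli k : ℂ) / (k.factorial : ℂ)) • (adC x) ^ k)) : _) (φ M) := rfl
      _ = (1 : (E →L[ℂ] E) →L[ℂ] (E →L[ℂ] E)) (φ M) := by rw [key_mul' hx]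
      _ = φ M := rfl
  · apply φ.injective
    obtain ⟨_, hφF⟩ := main (fun n => (((n + 1).factorial : ℂ))⁻¹) (normF_summable x) M
    obtain ⟨_, hφG2⟩ := main (fun k => (bernoulli k : ℂ) / (k.factorial : ℂ))
      (normG_summable hx) (dexp S M)
    calc φ (dexpInv S (dexp S M))
        = (∑' k : ℕ, ((bernoulli k : ℂ) / (k.factorial : ℂ)) • (adC x) ^ k) (φ (dexp S M)) :=
          hφG2
      _ = (∑' k : ℕ, ((bernoulli k : ℂ) / (k.factorial : ℂ)) • (adC x) ^ k)
            ((∑' n : ℕ, ((((n+1).factorial : ℂ))⁻¹) • (adC x) ^ n) (φ M)) := by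
          have h' : φ (dexp S M) =
              (∑' n : ℕ, ((((n+1).factorial : ℂ))⁻¹) • (adC x) ^ n) (φ M) := hφF
          rw [h']
      _ = (((∑' k : ℕ, ((bernoulli k : ℂ) / (k.factorial : ℂ)) • (adC x) ^ k) *
            (∑' n : ℕ, ((((n+1).factorial : ℂ))⁻¹) • (adC x) ^ n)) : _) (φ M) := rfl
      _ = (1 : (E →L[ℂ] E) →L[ℂ] (E →L[ℂ] E)) (φ M) := by rw [key_mul hx]
      _ = φ M := rfl
end
end
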